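/- Let G be an abelian group, g ∈ G a nonzero element of finite order, k ∈ ℕ_0, and j ∈ [0, ord(g)−1]. Then the set of lengths of factorizations of the zero-sum sequence ((−g)g)^{k·ord(g)+j} into minimal zero-sum sequences equals { 2k + ν(ord(g)−2) + j : ν ∈ [0,k] }; in particular its minimum is 2k + j. -/

import Mathlib

/-- A minimal zero-sum sequence over an abelian group. -/
def IsMinZS {G : Type*} [AddCommGroup G] (S : Multiset G) : Prop :=
  S ≠ 0 ∧ S.sum = 0 ∧ ∀ T : Multiset G, T ≤ S → T ≠ 0 → T ≠ S → T.sum ≠ 0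

/-- The set of lengths of factorizations of a zero-sum sequence into minimal
zero-sum sequences. -/
def LSet {G : Type*} [AddCommGroup G] (S : Multiset G) : Set ℕ :=
  { n | ∃ F : Multiset (Multiset G),
    (∀ B ∈ F, IsMinZS B) ∧ F.sum = S ∧ Multiset.card F = n }

open Multiset

section Aux

variable {G : Type*} [AddCommGroup G]

lemma card_sum' (F : Multiset (Multiset G)) :
    Multiset.card F.sum = (F.map Multiset.card).sum := by
  induction F using Multiset.induction with
  | empty => simp
  | cons a s ih => simp [ih]

lemma pair_eq_rep (g : G) : ({g, -g} : Multiset G) =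
    replicate 1 g + replicate 1 (-g) := by
  simp [Multiset.replicate_one, Multiset.singleton_add]

lemma pair_minZS (g : G) (hg : g ≠ 0) : IsMinZS ({g, -g} : Multiset G) := by
  refine ⟨by simp, by simp, ?_⟩
  intro T hle hT0 hTne hsum
  have hcle : Multiset.card T ≤ 2 := by
    have := Multiset.card_le_card hle
    simpa using this
  have hc1 : 1 ≤ Multiset.card T := by
    rw [Nat.one_le_iff_ne_zero]
    simpa using hT0
  interval_cases h : Multiset.card T
  · obtain ⟨a, rfl⟩ := Multiset.card_eq_one.mp h
    have ha : a ∈ ({g, -g} : Multiset G) := mem_of_le hle (by simp)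
    rw [Multiset.sum_singleton] at hsum
    rcases (by simpa using ha : a = g ∨ a = -g) with rfl | rfl
    · exact hg hsum
    · exact hg (neg_eq_zero.mp hsum)
  · exact hTne (Multiset.eq_of_le_of_card_le hle (by simp [h]))

lemma rep_minZS (h : G) (hfin : 0 < addOrderOf h) :
    IsMinZS (replicate (addOrderOf h) h) := by
  refine ⟨?_, ?_, ?_⟩
  · intro h0
    have := congrArg Multiset.card h0
    simp only [Multiset.card_replicate, Multiset.card_zero] at this
    omega
  · rw [Multiset.sum_replicate]
    exact addOrderOf_nsmul_eq_zero h
  · intro T hle hT0 hTne hsum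
    obtain ⟨c, hcle, rfl⟩ := Multiset.le_replicate_iff.mp hle
    rw [Multiset.sum_replicate] at hsum
    have hdvd : addOrderOf h ∣ c := addOrderOf_dvd_iff_nsmul_eq_zero.mpr hsum
    have hc0 : c ≠ 0 := by
      rintro rfl; simp at hT0
    have : c = addOrderOf h :=
      Nat.le_antisymm hcle (Nat.le_of_dvd (Nat.pos_of_ne_zero hc0) hdvd)
    exact hTne (by rw [this])

lemma decomp2 [DecidableEq G] (g : G) (hne : g ≠ -g) (B : Multiset G)
    (hB : ∀ x ∈ B, x = g ∨ x = -g) :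
    B = replicate (B.count g) g + replicate (B.count (-g)) (-g) := by
  ext x
  rw [Multiset.count_add, Multiset.count_replicate, Multiset.count_replicate]
  by_cases h1 : x = g
  · subst h1
    simp [hne, Ne.symm hne]
  · by_cases h2 : x = -g
    · subst h2
      simp [hne, Ne.symm hne]
    · have hx : x ∉ B := fun hx => by rcases hB x hx with rfl | rfl <;> simp_all
      simp [Ne.symm h1, Ne.symm h2, Multiset.count_eq_zero.mpr hx]

lemma rep_comb (a b c : ℕ) (x y : G) :
    (replicate a x + replicate a y) + replicate b x + replicate c y =
      replicate (a + b) x + replicate (a + c) y := by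
  rw [Multiset.replicate_add, Multiset.replicate_add]
  abel

lemma classify [DecidableEq G] (g : G) (hg : g ≠ 0) (hfin : 0 < addOrderOf g)
    (hne : g ≠ -g)
    {B : Multiset G}
    (hmin : IsMinZS B) (hB : ∀ x ∈ B, x = g ∨ x = -g) :
    B = {g, -g} ∨ B = replicate (addOrderOf g) g ∨
      B = replicate (addOrderOf g) (-g) := by
  obtain ⟨hB0, hBsum, hBmin⟩ := hmin
  have hdec := decomp2 g hne B hB
  set a := B.count g with ha
  set b := B.count (-g) with hb
  by_cases ha0 : a = 0
  · right; right
    have hBrep : B = replicate b (-g) := by rw [hdec, ha0]; simp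
    have hbsum : b • (-g) = 0 := by
      rw [hBrep, Multiset.sum_replicate] at hBsum; exact hBsum
    have hdvd : addOrderOf g ∣ b := by
      have := addOrderOf_dvd_iff_nsmul_eq_zero.mpr hbsum
      rwa [addOrderOf_neg] at this
    have hb0 : b ≠ 0 := by
      rintro h; apply hB0; rw [hBrep, h]; simp
    have hble : addOrderOf g ≤ b := Nat.le_of_dvd (Nat.pos_of_ne_zero hb0) hdvd
    by_contra hBne
    refine hBmin _ ?_ ?_ (fun h => hBne h.symm) ?_
    · rw [hBrep]; exact Multiset.replicate_mono _ hble
    · intro h0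
      have := congrArg Multiset.card h0
      simp only [Multiset.card_replicate, Multiset.card_zero] at this
      omega
    · rw [Multiset.sum_replicate, ← addOrderOf_neg g]
      exact addOrderOf_nsmul_eq_zero (-g)
  · by_cases hb0 : b = 0
    · right; left
      have hBrep : B = replicate a g := by rw [hdec, hb0]; simp
      have hasum : a • g = 0 := by
        rw [hBrep, Multiset.sum_replicate] at hBsum; exact hBsum
      have hdvd : addOrderOf g ∣ a := addOrderOf_dvd_iff_nsmul_eq_zero.mpr hasum
      have hale : addOrderOf g ≤ a := Nat.le_of_dvd (Nat.pos_of_ne_zero ha0) hdvd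
      by_contra hBne
      refine hBmin _ ?_ ?_ (fun h => hBne h.symm) ?_
      · rw [hBrep]; exact Multiset.replicate_mono _ hale
      · intro h0
        have := congrArg Multiset.card h0
        simp only [Multiset.card_replicate, Multiset.card_zero] at this
        omega
      · rw [Multiset.sum_replicate]
        exact addOrderOf_nsmul_eq_zero g
    · left
      have hle : ({g, -g} : Multiset G) ≤ B := by
        rw [pair_eq_rep, hdec]
        exact add_le_add (Multiset.replicate_mono _ (by omega))
          (Multiset.replicate_mono _ (by omega))
      by_contra hBne
      exact hBmin _ hle (by simp) (fun h => hBne h.symm) (by simp)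

lemma decomp3 {α : Type*} [DecidableEq α] (F : Multiset α) (p q r : α)
    (hpq : p ≠ q) (hpr : p ≠ r) (hqr : q ≠ r)
    (h : ∀ x ∈ F, x = p ∨ x = q ∨ x = r) :
    F = replicate (F.count p) p + replicate (F.count q) q +
      replicate (F.count r) r := by
  ext x
  rw [Multiset.count_add, Multiset.count_add, Multiset.count_replicate,
    Multiset.count_replicate, Multiset.count_replicate]
  by_cases h1 : x = p
  · subst h1; simp [Ne.symm hpq, Ne.symm hpr, hpq, hpr]
  · by_cases h2 : x = q
    · subst h2; simp [hpq, Ne.symm hpq, hqr, Ne.symm hqr]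
    · by_cases h3 : x = r
      · subst h3; simp [hpr, Ne.symm hpr, hqr, Ne.symm hqr]
      · have hx : x ∉ F := fun hx => by
          rcases h x hx with rfl | rfl | rfl <;> simp_all
        simp [Ne.symm h1, Ne.symm h2, Ne.symm h3,
          Multiset.count_eq_zero.mpr hx]

end Aux

theorem stmt15 (G : Type*) [AddCommGroup G] (g : G) (hg : g ≠ 0)
    (hfin : 0 < addOrderOf g) (k j : ℕ) (hj : j ≤ addOrderOf g - 1) :
    LSet (Multiset.replicate (k * addOrderOf g + j) g +
        Multiset.replicate (k * addOrderOf g + j) (-g)) =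
      { n | ∃ ν ≤ k, n = 2 * k + ν * (addOrderOf g - 2) + j } ∧
    sInf (LSet (Multiset.replicate (k * addOrderOf g + j) g +
        Multiset.replicate (k * addOrderOf g + j) (-g))) = 2 * k + j := by
  classical
  have hn1 : addOrderOf g ≠ 1 := by
    intro h
    exact hg (AddMonoid.addOrderOf_eq_one_iff.mp h)
  set n := addOrderOf g with hn
  have hn2 : 2 ≤ n := by omega
  have hjn : j < n := by omega
  set m := k * n + j with hm
  have key : LSet (Multiset.replicate m g + Multiset.replicate m (-g)) =
      { L | ∃ ν ≤ k, L = 2 * k + ν * (n - 2) + j } := by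
    ext L
    constructor
    · rintro ⟨F, hminF, hsum, hcard⟩
      by_cases hgg : g = -g
      · -- order two case
        have h2g : (2 : ℕ) • g = 0 := by
          rw [two_nsmul]
          nth_rewrite 2 [hgg]
          exact add_neg_cancel g
        have hne2 : n = 2 := by
          have hdvd : n ∣ 2 := addOrderOf_dvd_iff_nsmul_eq_zero.mpr h2g
          have := Nat.le_of_dvd (by norm_num) hdvd
          omega
        have hsum' : F.sum = replicate (m + m) g := by
          rw [hsum, ← hgg]
          exact (Multiset.replicate_add m m g).symm
        have hcards : ∀ B ∈ F, Multiset.card B = 2 := by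
          intro B hBF
          obtain ⟨hB0, hBsum, hBmin⟩ := hminF B hBF
          have hBle : B ≤ F.sum := Multiset.le_sum_of_mem hBF
          rw [hsum'] at hBle
          obtain ⟨c, hcle, rfl⟩ := Multiset.le_replicate_iff.mp hBle
          rw [Multiset.sum_replicate] at hBsum
          have hdvd : n ∣ c := addOrderOf_dvd_iff_nsmul_eq_zero.mpr hBsum
          have hc0 : c ≠ 0 := by rintro rfl; simp at hB0
          have hc2 : 2 ≤ c := by
            have := Nat.le_of_dvd (Nat.pos_of_ne_zero hc0) hdvd
            omega
          have hle2 : replicate 2 g ≤ replicate c g :=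
            Multiset.replicate_mono _ hc2
          have hceq : c = 2 := by
            by_contra hcne
            refine hBmin _ hle2 (by simp) ?_
              (by rw [Multiset.sum_replicate]; exact h2g)
            intro h
            have := congrArg Multiset.card h
            simp at this
            omega
          simp [hceq]
        have hcardF : Multiset.card F = m := by
          have h1 : Multiset.card F.sum = m + m := by
            rw [hsum']; simp
          rw [card_sum'] at h1
          have h2 : F.map Multiset.card = replicate (Multiset.card F) 2 := by
            rw [Multiset.eq_replicate]
            constructor
            · simp
            · intro b hb
              obtain ⟨B, hBF, rfl⟩ := Multiset.mem_map.mp hb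
              exact hcards B hBF
          rw [h2, Multiset.sum_replicate, smul_eq_mul] at h1
          omega
        refine ⟨0, Nat.zero_le k, ?_⟩
        rw [← hcard, hcardF, hm, hne2]
        omega
      · -- generic case
        have helem : ∀ B ∈ F, ∀ x ∈ B, x = g ∨ x = -g := by
          intro B hBF x hx
          have : x ∈ F.sum := Multiset.mem_of_le (Multiset.le_sum_of_mem hBF) hx
          rw [hsum] at this
          rcases Multiset.mem_add.mp this with h | h
          · exact Or.inl (Multiset.eq_of_mem_replicate h)
          · exact Or.inr (Multiset.eq_of_mem_replicate h)
        have hclass : ∀ B ∈ F, B = ({g, -g} : Multiset G) ∨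
            B = replicate n g ∨ B = replicate n (-g) := fun B hBF =>
          classify g hg hfin hgg (hminF B hBF) (helem B hBF)
        have hPQ : ({g, -g} : Multiset G) ≠ replicate n g := by
          intro h
          have := congrArg (Multiset.count (-g)) h
          simp [Multiset.count_replicate, Multiset.count_cons,
            Multiset.count_singleton, hgg, Ne.symm hgg] at this
        have hPR : ({g, -g} : Multiset G) ≠ replicate n (-g) := by
          intro h
          have := congrArg (Multiset.count g) h
          simp [Multiset.count_replicate, Multiset.count_cons,
            Multiset.count_singleton, hgg, Ne.symm hgg] at this
        have hQR : (replicate n g : Multiset G) ≠ replicate n (-g) := by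
          intro h
          have := congrArg (Multiset.count g) h
          simp [Multiset.count_replicate, hgg, Ne.symm hgg] at this
          omega
        set t := F.count ({g, -g} : Multiset G) with ht
        set v1 := F.count (replicate n g) with hv1
        set v2 := F.count (replicate n (-g)) with hv2
        have hF : F = replicate t ({g, -g} : Multiset G) +
            replicate v1 (replicate n g) + replicate v2 (replicate n (-g)) :=
          decomp3 F _ _ _ hPQ hPR hQR hclass
        have hFsum : F.sum = replicate (t + v1 * n) g +
            replicate (t + v2 * n) (-g) := by
          rw [hF, Multiset.sum_add, Multiset.sum_add, Multiset.sum_replicate,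
            Multiset.sum_replicate, Multiset.sum_replicate, pair_eq_rep]
          simp only [smul_add, Multiset.nsmul_replicate, mul_one]
          rw [rep_comb]
        rw [hFsum] at hsum
        have hcnt1 : t + v1 * n = m := by
          have := congrArg (Multiset.count g) hsum
          simpa [Multiset.count_add, Multiset.count_replicate, hgg,
            Ne.symm hgg] using this
        have hcnt2 : t + v2 * n = m := by
          have := congrArg (Multiset.count (-g)) hsum
          simpa [Multiset.count_add, Multiset.count_replicate, hgg,
            Ne.symm hgg] using this
        have hv12 : v1 = v2 := by
          have h' : v1 * n = v2 * n := by omega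
          exact Nat.eq_of_mul_eq_mul_right (by omega) h'
        have hcardF : Multiset.card F = t + v1 + v2 := by
          rw [hF]; simp
        have hv1k : v1 ≤ k := by
          by_contra hcon
          have h1 : (k + 1) * n ≤ v1 * n := Nat.mul_le_mul_right n (by omega)
          rw [add_mul, one_mul] at h1
          omega
        refine ⟨k - v1, Nat.sub_le k v1, ?_⟩
        rw [← hcard, hcardF, ← hv12]
        obtain ⟨w, rfl⟩ : ∃ w, k = v1 + w := ⟨k - v1, by omega⟩
        obtain ⟨n', hn'⟩ : ∃ n', n = n' + 2 := ⟨n - 2, by omega⟩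
        have hw : v1 + w - v1 = w := by omega
        rw [hw, hn']
        have hexp : (v1 + w) * (n' + 2) = v1 * (n' + 2) + w * n' + 2 * w := by
          ring
        have hmm : t + v1 * (n' + 2) = (v1 + w) * (n' + 2) + j := by
          rw [← hn']
          omega
        rw [hexp] at hmm
        have hsimp : n' + 2 - 2 = n' := by omega
        rw [hsimp]
        generalize v1 * (n' + 2) = A at hmm
        generalize w * n' = C at hmm ⊢
        omega
    · rintro ⟨ν, hν, rfl⟩
      obtain ⟨w, rfl⟩ : ∃ w, k = ν + w := ⟨k - ν, by omega⟩
      set t := ν * n + j with ht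
      refine ⟨replicate t ({g, -g} : Multiset G) +
        replicate w (replicate n g) + replicate w (replicate n (-g)),
        ?_, ?_, ?_⟩
      · intro B hB
        simp only [Multiset.mem_add, Multiset.mem_replicate] at hB
        rcases hB with (⟨-, rfl⟩ | ⟨-, rfl⟩) | ⟨-, rfl⟩
        · exact pair_minZS g hg
        · exact rep_minZS g hfin
        · have := rep_minZS (-g) (by rwa [addOrderOf_neg])
          rwa [addOrderOf_neg] at this
      · rw [Multiset.sum_add, Multiset.sum_add, Multiset.sum_replicate,
          Multiset.sum_replicate, Multiset.sum_replicate, pair_eq_rep]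
        simp only [smul_add, Multiset.nsmul_replicate, mul_one]
        have hmt : m = t + w * n := by
          rw [hm, ht, add_mul]
          ring
        rw [rep_comb, ← hmt]
      · simp only [Multiset.card_add, Multiset.card_replicate]
        rw [ht]
        obtain ⟨n', hn'⟩ : ∃ n', n = n' + 2 := ⟨n - 2, by omega⟩
        rw [hn']
        have hsimp : n' + 2 - 2 = n' := by omega
        rw [hsimp]
        have hexp : ν * (n' + 2) = ν * n' + 2 * ν := by ring
        rw [hexp]
        generalize ν * n' = A
        omega
  refine ⟨key, ?_⟩
  rw [key]
  have hmem : 2 * k + j ∈ { L | ∃ ν ≤ k, L = 2 * k + ν * (n - 2) + j } :=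
    ⟨0, Nat.zero_le k, by simp⟩
  refine le_antisymm (Nat.sInf_le hmem) (le_csInf ⟨_, hmem⟩ ?_)
  rintro b ⟨ν, -, rfl⟩
  generalize ν * (n - 2) = A
  omega
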